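/- Let c_a ≤ c_b be real numbers with Δc = c_b − c_a, and let Δq > 0. Define Π_a(p_a, p_b) = (p_a − c_a)·( 1/2 + (p_b − p_a)/(2(Δq + |p_b − p_a|)) ) and Π_b(p_b, p_a) = (p_b − c_b)·( 1/2 + (p_a − p_b)/(2(Δq + |p_a − p_b|)) ). Then the simultaneous pricing game has a unique pure-strategy Nash equilibrium, in which p_a = c_b + Δq and p_b = c_b + Δq/4 + (3/4)·√(Δq² + (8/9)·Δq·Δc). Furthermore, if Δc > 0, then firm b's equilibrium market share 1/2 + (p_a − p_b)/(2(Δq + |p_a − p_b|)) (evaluated at the equilibrium prices) is a strictly increasing function of Δq, as is firm b's equilibrium profit. -/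

import Mathlib

/-- Market share of a firm pricing at p against a competitor pricing at q, with
quantity dissimilarity dq, under the L1-complexity model with linear G. -/
noncomputable def share (dq p q : ℝ) : ℝ :=
  1/2 + (q - p) / (2 * (dq + |q - p|))

/-- Firm a's profit. -/
noncomputable def profitA (ca dq p q : ℝ) : ℝ := (p - ca) * share dq p q

/-- Firm b's profit. -/
noncomputable def profitB (cb dq p q : ℝ) : ℝ := (p - cb) * share dq p q

/-- Pure-strategy Nash equilibrium of the asymmetric pricing game. -/
def IsNE2 (ca cb dq pa pb : ℝ) : Prop :=
  (∀ p, profitA ca dq p pb ≤ profitA ca dq pa pb) ∧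
  (∀ p, profitB cb dq p pa ≤ profitB cb dq pb pa)

/-- Firm a's equilibrium price. -/
noncomputable def paStar (cb dq : ℝ) : ℝ := cb + dq

/-- Firm b's equilibrium price. -/
noncomputable def pbStar (cb dc dq : ℝ) : ℝ :=
  cb + dq / 4 + (3/4) * Real.sqrt (dq ^ 2 + (8/9) * dq * dc)

section helpers
variable {dq c q p t : ℝ}

lemma share_low (hdq : 0 < dq) (hp : p ≤ q) :
    share dq p q = (dq + 2*(q-p)) / (2*(dq + (q - p))) := by
  unfold share
  rw [abs_of_nonneg (by linarith)]
  have h : (0:ℝ) < dq + (q - p) := by linarith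
  field_simp
  ring

lemma share_high (hdq : 0 < dq) (hp : q ≤ p) :
    share dq p q = dq / (2*(dq + (p - q))) := by
  unfold share
  rw [abs_of_nonpos (by linarith), show dq + -(q - p) = dq + (p - q) by ring]
  have h : (0:ℝ) < dq + (p - q) := by linarith
  field_simp
  ring

lemma low_lt_half (hdq : 0 < dq) (hq : q ≤ c + dq) (hp : p < q) :
    (p - c) * share dq p q < dq/2 := by
  rw [share_low hdq hp.le, ← mul_div_assoc,
    div_lt_div_iff₀ (by linarith) (by norm_num)]
  nlinarith [sq_nonneg (q - p), mul_pos (sub_pos.mpr hp) (sub_pos.mpr hp),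
    mul_nonneg (show (0:ℝ) ≤ dq - (q - p) - (p - c) by linarith)
      (show (0:ℝ) ≤ dq + 2*(q-p) by linarith)]

lemma high_lt_half (hdq : 0 < dq) (hq : q < c + dq) (hp : q ≤ p) :
    (p - c) * share dq p q < dq/2 := by
  rw [share_high hdq hp, ← mul_div_assoc,
    div_lt_div_iff₀ (by linarith) (by norm_num)]
  nlinarith [mul_pos hdq (show (0:ℝ) < c + dq - q by linarith)]

lemma high_eq_half (hdq : 0 < dq) (hq : q = c + dq) (hp : q ≤ p) :
    (p - c) * share dq p q = dq/2 := by
  rw [share_high hdq hp, show p - c = dq + (p - q) by rw [hq]; ring]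
  have h : (0:ℝ) < dq + (p - q) := by linarith
  field_simp

lemma low_diff (hdq : 0 < dq) (ht : 0 ≤ t)
    (hfoc : 2*t^2 + 4*dq*t + dq^2 = (q - c)*dq) (hp : p ≤ q) :
    (dq + 2*t)^2/(2*dq) - (p - c) * share dq p q
      = (t - (q - p))^2/(dq + (q - p)) := by
  rw [share_low hdq hp]
  have h : (0:ℝ) < dq + (q - p) := by linarith
  field_simp
  linear_combination (dq+2*(q-p)) * hfoc


lemma val_at_max (hdq : 0 < dq) (ht : 0 ≤ t)
    (hfoc : 2*t^2 + 4*dq*t + dq^2 = (q - c)*dq) :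
    (q - t - c) * share dq (q - t) q = (dq + 2*t)^2/(2*dq) := by
  have hd := low_diff hdq ht hfoc (show q - t ≤ q by linarith)
  have h0 : (t - (q - (q - t)))^2/(dq + (q - (q - t))) = 0 := by
    rw [show t - (q - (q - t)) = 0 by ring]
    simp
  rw [h0] at hd
  linarith

lemma high_lt_max (hdq : 0 < dq) (ht : 0 < t)
    (hfoc : 2*t^2 + 4*dq*t + dq^2 = (q - c)*dq) (hp : q ≤ p) :
    (p - c) * share dq p q < (dq + 2*t)^2/(2*dq) := by
  rw [share_high hdq hp, ← mul_div_assoc,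
    div_lt_div_iff₀ (by linarith) (by linarith)]
  nlinarith [mul_nonneg (sub_nonneg.mpr hp) (mul_pos hdq ht).le,
    mul_nonneg (sub_nonneg.mpr hp) (mul_pos ht ht).le,
    mul_pos (mul_pos hdq ht) ht]

lemma global_max (hdq : 0 < dq) (ht : 0 < t)
    (hfoc : 2*t^2 + 4*dq*t + dq^2 = (q - c)*dq) :
    (∀ p, (p - c) * share dq p q ≤ (q - t - c) * share dq (q - t) q) ∧
    (∀ p, (p - c) * share dq p q = (q - t - c) * share dq (q - t) q →
      p = q - t) := by
  have hV := val_at_max hdq ht.le hfoc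
  constructor
  · intro p
    rw [hV]
    rcases le_or_gt p q with hp | hp
    · have hd := low_diff hdq ht.le hfoc hp
      have hpos : 0 ≤ (t - (q - p))^2/(dq + (q - p)) :=
        div_nonneg (sq_nonneg _) (by linarith)
      linarith
    · linarith [high_lt_max hdq ht hfoc hp.le]
  · intro p hp'
    rw [hV] at hp'
    rcases le_or_gt p q with hp | hp
    · have hd := low_diff hdq ht.le hfoc hp
      have h0 : (t - (q - p))^2/(dq + (q - p)) = 0 := by linarith
      have hne : dq + (q - p) ≠ 0 := ne_of_gt (by linarith)
      have h1 : (t - (q - p))^2 = 0 := by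
        rcases div_eq_zero_iff.mp h0 with h | h
        · exact h
        · exact absurd h hne
      have h2 : t - (q - p) = 0 := by
        exact pow_eq_zero_iff (by norm_num) |>.mp h1
      linarith
    · exact absurd hp' (ne_of_lt (high_lt_max hdq ht hfoc hp.le))

lemma no_br {pb : ℝ} (hdq : 0 < dq) (hq : q < c + dq)
    (hmax : ∀ p, (p - c) * share dq p q ≤ (pb - c) * share dq pb q) :
    False := by
  obtain ⟨v, hv⟩ : ∃ v, v = (pb - c) * share dq pb q := ⟨_, rfl⟩
  have hvlt : v < dq/2 := by
    rw [hv]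
    rcases lt_or_ge pb q with h | h
    · exact low_lt_half hdq hq.le h
    · exact high_lt_half hdq hq h
  obtain ⟨p, h1, h2⟩ :
      ∃ p, q < p ∧ q - dq + dq*(dq + c - q)/(dq - 2*v) < p := by
    refine ⟨max q (q - dq + dq*(dq + c - q)/(dq - 2*v)) + 1, ?_, ?_⟩
    · linarith [le_max_left q (q - dq + dq*(dq + c - q)/(dq - 2*v))]
    · linarith [le_max_right q (q - dq + dq*(dq + c - q)/(dq - 2*v))]
  have h3 : dq*(dq + c - q) < (p - q + dq)*(dq - 2*v) := by
    have h4 : dq*(dq + c - q)/(dq - 2*v) < p - q + dq := by linarith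
    calc dq*(dq + c - q) = dq*(dq + c - q)/(dq - 2*v) * (dq - 2*v) :=
          (div_mul_cancel₀ _ (by linarith)).symm
      _ < (p - q + dq)*(dq - 2*v) :=
          mul_lt_mul_of_pos_right h4 (by linarith)
  have hgt : v < (p - c) * share dq p q := by
    rw [share_high hdq h1.le, ← mul_div_assoc,
      lt_div_iff₀ (by linarith)]
    nlinarith [h3]
  rw [← hv] at hmax
  exact absurd (hmax p) (not_le.mpr hgt)

end helpers


set_option maxHeartbeats 2000000 in
/-- Lemma 5 — existence and uniqueness of the pure-strategy
equilibrium of the asymmetric pricing game, with firm b's equilibrium market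
share and profit strictly increasing in Δq when Δc > 0. -/
theorem stmt_17 (ca cb : ℝ) (hc : ca ≤ cb) :
    (∀ dq : ℝ, 0 < dq →
      IsNE2 ca cb dq (paStar cb dq) (pbStar cb (cb - ca) dq) ∧
      ∀ pa pb, IsNE2 ca cb dq pa pb →
        pa = paStar cb dq ∧ pb = pbStar cb (cb - ca) dq) ∧
    (0 < cb - ca →
      StrictMonoOn
        (fun dq => share dq (pbStar cb (cb - ca) dq) (paStar cb dq)) (Set.Ioi 0) ∧
      StrictMonoOn
        (fun dq => (pbStar cb (cb - ca) dq - cb) *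
          share dq (pbStar cb (cb - ca) dq) (paStar cb dq)) (Set.Ioi 0)) := by
  constructor
  · intro dq hdq
    have hdc0 : 0 ≤ cb - ca := by linarith
    have harg : 0 ≤ dq^2 + (8/9)*dq*(cb - ca) := by nlinarith
    obtain ⟨s, hsdef⟩ : ∃ s, s = Real.sqrt (dq^2 + (8/9)*dq*(cb - ca)) := ⟨_, rfl⟩
    have hs2 : s^2 = dq^2 + (8/9)*dq*(cb - ca) := by rw [hsdef]; exact Real.sq_sqrt harg
    have hs0 : 0 ≤ s := hsdef ▸ Real.sqrt_nonneg _
    have hsge : dq ≤ s := by nlinarith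
    have hpb : pbStar cb (cb - ca) dq = (cb + dq) + (3/4)*(s - dq) := by
      rw [hsdef]; simp only [pbStar]; ring
    have hteq : 2*((3/4)*(s - dq))^2 + 3*dq*((3/4)*(s - dq)) = (cb - ca)*dq := by
      linear_combination (9/8)*hs2
    have ht0 : 0 ≤ (3/4)*(s - dq) := by linarith
    constructor
    · -- existence
      constructor
      · -- firm a's optimality
        intro p
        simp only [profitA, paStar]
        rcases eq_or_lt_of_le hdc0 with hdc | hdc
        · -- cb = ca
          have hccb : cb = ca := by linarith
          have hseq : s = dq := by
            rw [hsdef, show dq^2 + (8/9)*dq*(cb - ca) = dq^2 by rw [← hdc]; ring]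
            exact Real.sqrt_sq hdq.le
          have hq : pbStar cb (cb - ca) dq = ca + dq := by
            rw [hpb, hseq, hccb]; ring
          have hle : pbStar cb (cb - ca) dq ≤ cb + dq := by rw [hq, hccb]
          have hmaxv : (cb + dq - ca) * share dq (cb + dq) (pbStar cb (cb - ca) dq)
              = dq/2 := high_eq_half hdq hq hle
          rcases lt_or_ge p (pbStar cb (cb - ca) dq) with hp | hp
          · linarith [low_lt_half hdq hq.le hp]
          · linarith [high_eq_half hdq hq hp]
        · -- cb > ca
          have ht : 0 < (3/4)*(s - dq) := by nlinarith
          have hfoc : 2*((3/4)*(s - dq))^2 + 4*dq*((3/4)*(s - dq)) + dq^2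
              = (pbStar cb (cb - ca) dq - ca)*dq := by
            rw [hpb]; linear_combination hteq
          have hM := global_max hdq ht hfoc
          have hpa : pbStar cb (cb - ca) dq - (3/4)*(s - dq) = cb + dq := by
            rw [hpb]; ring
          have := hM.1 p
          rw [hpa] at this
          exact this
      · -- firm b's optimality
        intro p
        simp only [profitB, paStar]
        have hpbge : cb + dq ≤ pbStar cb (cb - ca) dq := by rw [hpb]; linarith
        have hmaxv := high_eq_half hdq (rfl : cb + dq = cb + dq) hpbge
        rcases lt_or_ge p (cb + dq) with hp | hp
        · linarith [low_lt_half hdq le_rfl hp]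
        · linarith [high_eq_half hdq (rfl : cb + dq = cb + dq) hp]
    · -- uniqueness
      rintro pa pb ⟨ha, hb⟩
      simp only [profitA] at ha
      simp only [profitB] at hb
      have hpa : pa = cb + dq := by
        rcases lt_trichotomy pa (cb + dq) with h | h | h
        · exact (no_br hdq (by linarith) hb).elim
        · exact h
        · exfalso
          obtain ⟨tb, htb⟩ : ∃ tb, tb = Real.sqrt ((dq^2 + (pa - cb)*dq)/2) - dq :=
            ⟨_, rfl⟩
          have hargb : 0 ≤ (dq^2 + (pa - cb)*dq)/2 := by nlinarith
          have htb2 : (tb + dq)^2 = (dq^2 + (pa - cb)*dq)/2 := by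
            rw [htb, sub_add_cancel]; exact Real.sq_sqrt hargb
          have htbpos : 0 < tb := by
            rw [htb]
            have h5 : dq < Real.sqrt ((dq^2 + (pa - cb)*dq)/2) :=
              (Real.lt_sqrt hdq.le).mpr (by nlinarith)
            linarith
          have hfocb : 2*tb^2 + 4*dq*tb + dq^2 = (pa - cb)*dq := by
            linear_combination 2*htb2
          have hMb := global_max hdq htbpos hfocb
          have hpbeq : pb = pa - tb := hMb.2 pb (le_antisymm (hMb.1 pb) (hb (pa - tb)))
          rcases lt_trichotomy pb (ca + dq) with h2 | h2 | h2
          · exact no_br hdq (by linarith) ha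
          · have hpa2 : pa = tb + ca + dq := by
              rw [hpbeq] at h2; linarith
            have hfocb' : 2*tb^2 + 3*dq*tb + (cb - ca)*dq = 0 := by
              linear_combination hfocb + dq * hpa2
            nlinarith [mul_pos htbpos htbpos, mul_pos hdq htbpos,
              mul_nonneg (sub_nonneg.mpr hc) hdq.le]
          · obtain ⟨ta, hta⟩ : ∃ ta, ta = Real.sqrt ((dq^2 + (pb - ca)*dq)/2) - dq :=
              ⟨_, rfl⟩
            have harga : 0 ≤ (dq^2 + (pb - ca)*dq)/2 := by nlinarith
            have hta2 : (ta + dq)^2 = (dq^2 + (pb - ca)*dq)/2 := by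
              rw [hta, sub_add_cancel]; exact Real.sq_sqrt harga
            have htapos : 0 < ta := by
              rw [hta]
              have h5 : dq < Real.sqrt ((dq^2 + (pb - ca)*dq)/2) :=
                (Real.lt_sqrt hdq.le).mpr (by nlinarith)
              linarith
            have hfoca : 2*ta^2 + 4*dq*ta + dq^2 = (pb - ca)*dq := by
              linear_combination 2*hta2
            have hMa := global_max hdq htapos hfoca
            have hpaeq : pa = pb - ta :=
              hMa.2 pa (le_antisymm (hMa.1 pa) (ha (pb - ta)))
            linarith
      subst hpa
      refine ⟨by simp [paStar], ?_⟩
      rcases lt_trichotomy pb (ca + dq) with h | h | h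
      · exact (no_br hdq (by linarith) ha).elim
      · -- pb = ca + dq forces cb = ca
        have hgeb : cb + dq ≤ pb := by
          by_contra hlt
          push_neg at hlt
          have h1 := low_lt_half hdq (le_refl (cb + dq)) hlt
          have h2 := high_eq_half hdq (rfl : cb + dq = cb + dq) (le_refl (cb + dq))
          linarith [hb (cb + dq)]
        have hccb : cb = ca := le_antisymm (by linarith) hc
        have hseq : s = dq := by
          rw [hsdef, show dq^2 + (8/9)*dq*(cb - ca) = dq^2 by rw [hccb]; ring]
          exact Real.sqrt_sq hdq.le
        rw [hpb, hseq, h, hccb]; ring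
      · -- pb > ca + dq
        obtain ⟨ta, hta⟩ : ∃ ta, ta = Real.sqrt ((dq^2 + (pb - ca)*dq)/2) - dq :=
          ⟨_, rfl⟩
        have harga : 0 ≤ (dq^2 + (pb - ca)*dq)/2 := by nlinarith
        have hta2 : (ta + dq)^2 = (dq^2 + (pb - ca)*dq)/2 := by
          rw [hta, sub_add_cancel]; exact Real.sq_sqrt harga
        have htapos : 0 < ta := by
          rw [hta]
          have h5 : dq < Real.sqrt ((dq^2 + (pb - ca)*dq)/2) :=
            (Real.lt_sqrt hdq.le).mpr (by nlinarith)
          linarith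
        have hfoca : 2*ta^2 + 4*dq*ta + dq^2 = (pb - ca)*dq := by
          linear_combination 2*hta2
        have hMa := global_max hdq htapos hfoca
        have hpaeq : cb + dq = pb - ta :=
          hMa.2 _ (le_antisymm (hMa.1 _) (ha (pb - ta)))
        have hta3 : 2*ta^2 + 3*dq*ta = (cb - ca)*dq := by
          linear_combination hfoca - dq * hpaeq
        have hzero : (ta - (3/4)*(s - dq))*(2*ta + 2*((3/4)*(s - dq)) + 3*dq) = 0 := by
          linear_combination hta3 - hteq
        have hfac : ta = (3/4)*(s - dq) := by
          rcases mul_eq_zero.mp hzero with h' | h'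
          · linarith
          · nlinarith
        rw [hpb]
        linarith
  · -- Part 2: monotonicity
    intro hdc
    have key : ∀ x : ℝ, 0 < x →
        share x (pbStar cb (cb - ca) x) (paStar cb x)
          = 2*x/(x + 3*Real.sqrt (x^2 + (8/9)*x*(cb - ca))) := by
      intro x hx
      have harg : 0 ≤ x^2 + (8/9)*x*(cb - ca) := by nlinarith
      have hs0 := Real.sqrt_nonneg (x^2 + (8/9)*x*(cb - ca))
      have hs2 := Real.sq_sqrt harg
      have hsge : x ≤ Real.sqrt (x^2 + (8/9)*x*(cb - ca)) := by nlinarith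
      have hple : paStar cb x ≤ pbStar cb (cb - ca) x := by
        simp only [paStar, pbStar]; linarith
      rw [share_high hx hple,
        show pbStar cb (cb - ca) x - paStar cb x
          = (3/4)*(Real.sqrt (x^2 + (8/9)*x*(cb - ca)) - x) by
            simp only [paStar, pbStar]; ring]
      rw [div_eq_div_iff (by linarith) (by linarith)]
      ring
    have keyP : ∀ x : ℝ, 0 < x →
        (pbStar cb (cb - ca) x - cb) *
          share x (pbStar cb (cb - ca) x) (paStar cb x) = x/2 := by
      intro x hx
      have harg : 0 ≤ x^2 + (8/9)*x*(cb - ca) := by nlinarith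
      have hs0 := Real.sqrt_nonneg (x^2 + (8/9)*x*(cb - ca))
      rw [key x hx,
        show pbStar cb (cb - ca) x - cb
          = (x + 3*Real.sqrt (x^2 + (8/9)*x*(cb - ca)))/4 by
            simp only [pbStar]; ring]
      have hne : x + 3*Real.sqrt (x^2 + (8/9)*x*(cb - ca)) ≠ 0 :=
        ne_of_gt (by linarith)
      field_simp
      ring
    constructor
    · intro x hx y hy hxy
      simp only
      have hx' : (0:ℝ) < x := hx
      have hy' : (0:ℝ) < y := hy
      rw [key x hx', key y hy']
      have hargx : 0 ≤ x^2 + (8/9)*x*(cb - ca) := by nlinarith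
      have hargy : 0 ≤ y^2 + (8/9)*y*(cb - ca) := by nlinarith
      have hsx0 := Real.sqrt_nonneg (x^2 + (8/9)*x*(cb - ca))
      have hsy0 := Real.sqrt_nonneg (y^2 + (8/9)*y*(cb - ca))
      rw [div_lt_div_iff₀ (by linarith) (by linarith)]
      have h1 : x * Real.sqrt (y^2 + (8/9)*y*(cb - ca))
          = Real.sqrt (x^2*(y^2 + (8/9)*y*(cb - ca))) := by
        rw [Real.sqrt_mul (sq_nonneg x), Real.sqrt_sq hx'.le]
      have h2 : y * Real.sqrt (x^2 + (8/9)*x*(cb - ca))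
          = Real.sqrt (y^2*(x^2 + (8/9)*x*(cb - ca))) := by
        rw [Real.sqrt_mul (sq_nonneg y), Real.sqrt_sq hy'.le]
      have h3 : x * Real.sqrt (y^2 + (8/9)*y*(cb - ca))
          < y * Real.sqrt (x^2 + (8/9)*x*(cb - ca)) := by
        rw [h1, h2]
        apply Real.sqrt_lt_sqrt (by positivity)
        nlinarith [mul_pos (mul_pos (mul_pos hx' hy') (sub_pos.mpr hxy)) hdc]
      nlinarith [h3]
    · intro x hx y hy hxy
      simp only
      have hx' : (0:ℝ) < x := hx
      have hy' : (0:ℝ) < y := hy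
      rw [keyP x hx', keyP y hy']
      linarith
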